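/- Let p ≥ 3 be prime and let B ⊂ GL₂(𝔽_p) be the subgroup of matrices of the form [[*,*],[0,1]]. Let V ⊂ M₂(𝔽_p) be the 3-dimensional subspace of trace-zero matrices with the adjoint (conjugation) action of B. Then the action of B on the set of 1-dimensional subspaces (lines) of V has exactly 5 orbits, of cardinalities 1, p, p, p(p-1)/2, p(p-1)/2; representatives are: the line through [[0,1],[0,0]]; the line through [[1,0],[0,-1]] (orbit of size p consisting of upper-triangular non-strictly-upper-triangular lines); the line through [[0,0],[1,0]] (orbit of size p); the line through [[0,1],[1,0]]; and the line through [[0,b],[1,0]] with b a fixed non-square in 𝔽_p^×. -/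

import Mathlib

open Matrix

namespace Stmt14Aux

variable {p : ℕ} [Fact p.Prime]

/-- Trace-zero 2×2 matrix from coordinates. -/
def mk2 (x y z : ZMod p) : Matrix (Fin 2) (Fin 2) (ZMod p) := !![x, y; z, -x]

lemma mk2_inj {x y z x' y' z' : ZMod p} (h : mk2 x y z = mk2 x' y' z') :
    x = x' ∧ y = y' ∧ z = z' := by
  refine ⟨?_, ?_, ?_⟩
  · simpa [mk2] using congrFun (congrFun h 0) 0
  · simpa [mk2] using congrFun (congrFun h 0) 1
  · simpa [mk2] using congrFun (congrFun h 1) 0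

lemma mk2_ne_zero {x y z : ZMod p} (h : ¬(x = 0 ∧ y = 0 ∧ z = 0)) : mk2 x y z ≠ 0 := by
  intro h0
  refine h ⟨?_, ?_, ?_⟩
  · simpa [mk2] using congrFun (congrFun h0 0) 0
  · simpa [mk2] using congrFun (congrFun h0 0) 1
  · simpa [mk2] using congrFun (congrFun h0 1) 0

lemma smul_mk2 (μ x y z : ZMod p) : μ • mk2 x y z = mk2 (μ*x) (μ*y) (μ*z) := by
  ext i j
  fin_cases i <;> fin_cases j <;> simp [mk2, mul_comm]

lemma span_mk2_eq_iff {x y z x' y' z' : ZMod p} :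
    Submodule.span (ZMod p) {mk2 x y z} = Submodule.span (ZMod p) {mk2 x' y' z'} ↔
    ∃ μ : ZMod p, μ ≠ 0 ∧ x' = μ * x ∧ y' = μ * y ∧ z' = μ * z := by
  rw [Submodule.span_singleton_eq_span_singleton]
  constructor
  · rintro ⟨u, hu⟩
    rw [Units.smul_def, smul_mk2] at hu
    obtain ⟨h1, h2, h3⟩ := mk2_inj hu
    exact ⟨(u : ZMod p), u.ne_zero, h1.symm, h2.symm, h3.symm⟩
  · rintro ⟨μ, hμ, h1, h2, h3⟩
    refine ⟨Units.mk0 μ hμ, ?_⟩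
    rw [Units.smul_def, smul_mk2]
    simp [h1, h2, h3]

/-- Borel element. -/
def gB (a c : ZMod p) (ha : a ≠ 0) : GL (Fin 2) (ZMod p) :=
  ⟨!![a, c; 0, 1], !![a⁻¹, -(a⁻¹*c); 0, 1],
   by ext i j; fin_cases i <;> fin_cases j <;>
        (simp [Matrix.mul_apply, Fin.sum_univ_two]; try field_simp; try ring),
   by ext i j; fin_cases i <;> fin_cases j <;>
        (simp [Matrix.mul_apply, Fin.sum_univ_two]; try field_simp; try ring)⟩

lemma coe_gB (a c : ZMod p) (ha : a ≠ 0) :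
    ((gB a c ha : GL (Fin 2) (ZMod p)) : Matrix (Fin 2) (Fin 2) (ZMod p)) = !![a, c; 0, 1] := rfl

lemma coe_gB_inv (a c : ZMod p) (ha : a ≠ 0) :
    ((↑(gB a c ha)⁻¹ : Matrix (Fin 2) (Fin 2) (ZMod p))) = !![a⁻¹, -(a⁻¹*c); 0, 1] := rfl

/-- The conjugation formula. -/
lemma conj_mk2 (a c x y z : ZMod p) (ha : a ≠ 0) :
    !![a, c; 0, 1] * mk2 x y z * !![a⁻¹, -(a⁻¹*c); 0, 1]
      = mk2 (x + a⁻¹*c*z) (a*y - 2*c*x - a⁻¹*c^2*z) (a⁻¹*z) := by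
  ext i j
  fin_cases i <;> fin_cases j <;>
    (simp [mk2, Matrix.mul_apply, Fin.sum_univ_two]; try field_simp; try ring)

/-- For a Borel GL element, identify its matrix and the matrix of its inverse. -/
lemma gl_eq_gB (g : GL (Fin 2) (ZMod p))
    (h10 : (g : Matrix (Fin 2) (Fin 2) (ZMod p)) 1 0 = 0)
    (h11 : (g : Matrix (Fin 2) (Fin 2) (ZMod p)) 1 1 = 1) :
    ∃ (a c : ZMod p) (ha : a ≠ 0),
      (g : Matrix (Fin 2) (Fin 2) (ZMod p)) = !![a, c; 0, 1] ∧
      ((↑g⁻¹ : Matrix (Fin 2) (Fin 2) (ZMod p))) = !![a⁻¹, -(a⁻¹*c); 0, 1] := by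
  set a := (g : Matrix (Fin 2) (Fin 2) (ZMod p)) 0 0 with ha_def
  set c := (g : Matrix (Fin 2) (Fin 2) (ZMod p)) 0 1 with hc_def
  have hgm : (g : Matrix (Fin 2) (Fin 2) (ZMod p)) = !![a, c; 0, 1] := by
    rw [Matrix.eta_fin_two (g : Matrix (Fin 2) (Fin 2) (ZMod p)), h10, h11]
  have ha : a ≠ 0 := by
    have h1 : IsUnit ((g : Matrix (Fin 2) (Fin 2) (ZMod p)).det) := by
      refine (Matrix.isUnit_iff_isUnit_det _).mp ⟨g, rfl⟩
    rw [hgm, Matrix.det_fin_two_of] at h1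
    simpa using h1.ne_zero
  refine ⟨a, c, ha, hgm, ?_⟩
  have hB : (g : Matrix (Fin 2) (Fin 2) (ZMod p)) * !![a⁻¹, -(a⁻¹*c); 0, 1] = 1 := by
    rw [hgm]
    ext i j
    fin_cases i <;> fin_cases j <;>
      (simp [Matrix.mul_apply, Fin.sum_univ_two]; try field_simp; try ring)
  calc (↑g⁻¹ : Matrix (Fin 2) (Fin 2) (ZMod p))
      = ↑g⁻¹ * ((g : Matrix (Fin 2) (Fin 2) (ZMod p)) * !![a⁻¹, -(a⁻¹*c); 0, 1]) := by
        rw [hB, mul_one]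
    _ = (↑g⁻¹ * (g : Matrix (Fin 2) (Fin 2) (ZMod p))) * !![a⁻¹, -(a⁻¹*c); 0, 1] := by
        rw [mul_assoc]
    _ = !![a⁻¹, -(a⁻¹*c); 0, 1] := by
        rw [← Units.val_mul, inv_mul_cancel g, Units.val_one, one_mul]

lemma quadChar_eq_neg_one {t : ZMod p} (ht : ¬ IsSquare t) :
    quadraticChar (ZMod p) t = -1 :=
  quadraticChar_neg_one_iff_not_isSquare.mpr ht

lemma exists_sq_mul {b t : ZMod p} (hb : ¬ IsSquare b) (ht : ¬ IsSquare t) :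
    ∃ s : ZMod p, s ≠ 0 ∧ s^2 * b = t := by
  have hb0 : b ≠ 0 := fun h => hb (h ▸ IsSquare.zero)
  have ht0 : t ≠ 0 := fun h => ht (h ▸ IsSquare.zero)
  have hbinv : quadraticChar (ZMod p) b⁻¹ = -1 := by
    have h1 : quadraticChar (ZMod p) b⁻¹ * quadraticChar (ZMod p) b = 1 := by
      rw [← _root_.map_mul, inv_mul_cancel₀ hb0, _root_.map_one]
    rw [quadChar_eq_neg_one hb] at h1
    omega
  have h1 : IsSquare (t * b⁻¹) := by
    refine (quadraticChar_one_iff_isSquare (mul_ne_zero ht0 (inv_ne_zero hb0))).mp ?_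
    rw [_root_.map_mul, quadChar_eq_neg_one ht, hbinv]
    ring
  obtain ⟨s, hs⟩ := h1
  have hs0 : s ≠ 0 := by
    rintro rfl
    rw [mul_zero] at hs
    exact ht0 (by field_simp at hs; simpa using hs)
  refine ⟨s, hs0, ?_⟩
  have : t * b⁻¹ = s^2 := by rw [hs]; ring
  field_simp at this
  linear_combination -this

lemma sq_mul_not_isSquare {b a : ZMod p} (hb : ¬ IsSquare b) (ha : a ≠ 0) :
    ¬ IsSquare (a^2 * b) := by
  intro h
  refine hb ?_
  have hbe : b = (a⁻¹)^2 * (a^2 * b) := by field_simp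
  rw [hbe]
  exact (IsSquare.mul (⟨a⁻¹, (sq a⁻¹)⟩) h)

lemma card_sq_nonsq (hp : p ≠ 2) :
    (Finset.univ.filter (fun t : ZMod p => t ≠ 0 ∧ IsSquare t)).card = (p-1)/2 ∧
    (Finset.univ.filter (fun t : ZMod p => ¬ IsSquare t)).card = (p-1)/2 := by
  obtain ⟨b, hb⟩ := FiniteField.exists_nonsquare (F := ZMod p)
    (by rwa [ZMod.ringChar_zmod_n])
  have hb0 : b ≠ 0 := fun h => hb (h ▸ IsSquare.zero)
  set S := Finset.univ.filter (fun t : ZMod p => t ≠ 0 ∧ IsSquare t) with hS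
  set N := Finset.univ.filter (fun t : ZMod p => ¬ IsSquare t) with hN
  have himg : N = S.image (fun t => b * t) := by
    ext u
    simp only [hS, hN, Finset.mem_filter, Finset.mem_image, Finset.mem_univ, true_and]
    constructor
    · intro hu
      obtain ⟨s, hs0, hs⟩ := exists_sq_mul hb hu
      exact ⟨s^2, ⟨pow_ne_zero 2 hs0, ⟨s, (sq s)⟩⟩, by linear_combination hs⟩
    · rintro ⟨t, ⟨ht0, hts⟩, rfl⟩
      intro h
      refine hb ?_
      have hbe : b = (b * t) * t⁻¹ := by field_simp
      rw [hbe]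
      exact h.mul hts.inv
  have hcard : N.card = S.card := by
    rw [himg]; exact Finset.card_image_of_injective _ (mul_right_injective₀ hb0)
  have hdisj : Disjoint S N := by
    rw [Finset.disjoint_left]
    intro u hu hn
    simp only [hS, hN, Finset.mem_filter] at hu hn
    exact hn.2 hu.2.2
  have hunion : S ∪ N = Finset.univ.filter (fun t : ZMod p => t ≠ 0) := by
    ext u
    simp only [hS, hN, Finset.mem_union, Finset.mem_filter, Finset.mem_univ, true_and]
    constructor
    · rintro (⟨h0, _⟩ | hn)
      · exact h0
      · exact fun h => hn (h ▸ IsSquare.zero)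
    · intro h0
      by_cases hq : IsSquare u
      · exact Or.inl ⟨h0, hq⟩
      · exact Or.inr hq
  have hcardu : (Finset.univ.filter (fun t : ZMod p => t ≠ 0)).card = p - 1 := by
    have he : Finset.univ.filter (fun t : ZMod p => t ≠ 0) = Finset.univ.erase 0 := by
      ext u; simp [Finset.mem_erase, and_comm]
    rw [he, Finset.card_erase_of_mem (Finset.mem_univ _), Finset.card_univ, ZMod.card]
  have hkey := Finset.card_union_of_disjoint hdisj
  rw [hunion, hcardu, hcard] at hkey
  constructor <;> omega
  
lemma natCard_sq (hp : p ≠ 2) : Nat.card {t : ZMod p // t ≠ 0 ∧ IsSquare t} = (p-1)/2 := by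
  rw [Nat.card_eq_fintype_card, Fintype.card_subtype]
  exact (card_sq_nonsq hp).1

lemma natCard_nonsq (hp : p ≠ 2) : Nat.card {t : ZMod p // ¬ IsSquare t} = (p-1)/2 := by
  rw [Nat.card_eq_fintype_card, Fintype.card_subtype]
  exact (card_sq_nonsq hp).2

lemma ncard_range {α β : Type*} (f : β → α) (hf : Function.Injective f) :
    (Set.range f).ncard = Nat.card β := by
  rw [← Set.image_univ, Set.ncard_image_of_injective _ hf, Set.ncard_univ]

end Stmt14Aux
open Stmt14Aux in
theorem stmt_14 (p : ℕ) [Fact p.Prime] (hp3 : 3 ≤ p)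
    (b : ZMod p) (hb : ¬ IsSquare b)
    (conj : GL (Fin 2) (ZMod p) →
      Matrix (Fin 2) (Fin 2) (ZMod p) →ₗ[ZMod p] Matrix (Fin 2) (Fin 2) (ZMod p))
    (hconj : ∀ g : GL (Fin 2) (ZMod p),
      conj g = (LinearMap.mulLeft (ZMod p) ((g : Matrix (Fin 2) (Fin 2) (ZMod p)))).comp
        (LinearMap.mulRight (ZMod p) ((↑(g⁻¹) : Matrix (Fin 2) (Fin 2) (ZMod p)))))
    (L : Set (Submodule (ZMod p) (Matrix (Fin 2) (Fin 2) (ZMod p))))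
    (hL : L = {W | (∀ m ∈ W, Matrix.trace m = 0) ∧
      ∃ v : Matrix (Fin 2) (Fin 2) (ZMod p), v ≠ 0 ∧ W = Submodule.span (ZMod p) {v}})
    (rel : Submodule (ZMod p) (Matrix (Fin 2) (Fin 2) (ZMod p)) →
      Submodule (ZMod p) (Matrix (Fin 2) (Fin 2) (ZMod p)) → Prop)
    (hrel : ∀ W W', rel W W' ↔ ∃ g : GL (Fin 2) (ZMod p),
      (g : Matrix (Fin 2) (Fin 2) (ZMod p)) 1 0 = 0 ∧
      (g : Matrix (Fin 2) (Fin 2) (ZMod p)) 1 1 = 1 ∧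
      W' = Submodule.map (conj g) W)
    (r₁ r₂ r₃ r₄ r₅ : Submodule (ZMod p) (Matrix (Fin 2) (Fin 2) (ZMod p)))
    (h₁ : r₁ = Submodule.span (ZMod p) {!![0, 1; 0, 0]})
    (h₂ : r₂ = Submodule.span (ZMod p) {!![1, 0; 0, -1]})
    (h₃ : r₃ = Submodule.span (ZMod p) {!![0, 0; 1, 0]})
    (h₄ : r₄ = Submodule.span (ZMod p) {!![0, 1; 1, 0]})
    (h₅ : r₅ = Submodule.span (ZMod p) {!![0, b; 1, 0]}) :
    (r₁ ∈ L ∧ r₂ ∈ L ∧ r₃ ∈ L ∧ r₄ ∈ L ∧ r₅ ∈ L) ∧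
    (∀ W ∈ L, rel r₁ W ∨ rel r₂ W ∨ rel r₃ W ∨ rel r₄ W ∨ rel r₅ W) ∧
    List.Pairwise (fun r r' => ¬ rel r r') [r₁, r₂, r₃, r₄, r₅] ∧
    Set.ncard {W ∈ L | rel r₁ W} = 1 ∧
    Set.ncard {W ∈ L | rel r₂ W} = p ∧
    Set.ncard {W ∈ L | rel r₃ W} = p ∧
    Set.ncard {W ∈ L | rel r₄ W} = p * (p - 1) / 2 ∧
    Set.ncard {W ∈ L | rel r₅ W} = p * (p - 1) / 2 := by
  have hp2 : p ≠ 2 := by omega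
  have hb0 : b ≠ 0 := fun h => hb (h ▸ IsSquare.zero)
  have h2z : (2 : ZMod p) ≠ 0 := by
    intro h
    have h' : ((2 : ℕ) : ZMod p) = 0 := by exact_mod_cast h
    rw [ZMod.natCast_eq_zero_iff] at h'
    have := Nat.le_of_dvd (by norm_num) h'
    omega
  -- representatives in mk2 form
  have H1 : r₁ = Submodule.span (ZMod p) {mk2 0 1 0} := by rw [h₁]; norm_num [mk2]
  have H2 : r₂ = Submodule.span (ZMod p) {mk2 1 0 0} := by rw [h₂]; norm_num [mk2]
  have H3 : r₃ = Submodule.span (ZMod p) {mk2 0 0 1} := by rw [h₃]; norm_num [mk2]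
  have H4 : r₄ = Submodule.span (ZMod p) {mk2 0 1 1} := by rw [h₄]; norm_num [mk2]
  have H5 : r₅ = Submodule.span (ZMod p) {mk2 0 b 1} := by rw [h₅]; norm_num [mk2]
  -- conj as explicit conjugation
  have conj_apply : ∀ (g : GL (Fin 2) (ZMod p)) (v : Matrix (Fin 2) (Fin 2) (ZMod p)),
      (conj g) v = (g : Matrix (Fin 2) (Fin 2) (ZMod p)) * v
        * ((↑g⁻¹ : Matrix (Fin 2) (Fin 2) (ZMod p))) := by
    intro g v
    rw [hconj]
    simp only [LinearMap.coe_comp, Function.comp_apply, LinearMap.mulLeft_apply,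
      LinearMap.mulRight_apply]
    rw [mul_assoc]
  -- the master relation lemma
  have relIff : ∀ (x y z : ZMod p) (W : Submodule (ZMod p) (Matrix (Fin 2) (Fin 2) (ZMod p))),
      rel (Submodule.span (ZMod p) {mk2 x y z}) W ↔
      ∃ a c : ZMod p, a ≠ 0 ∧ W = Submodule.span (ZMod p)
        {mk2 (x + a⁻¹*c*z) (a*y - 2*c*x - a⁻¹*c^2*z) (a⁻¹*z)} := by
    intro x y z W
    rw [hrel]
    constructor
    · rintro ⟨g, h10, h11, rfl⟩
      obtain ⟨a, c, ha, hgm, hginv⟩ := gl_eq_gB g h10 h11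
      refine ⟨a, c, ha, ?_⟩
      have hc : (conj g) (mk2 x y z)
          = mk2 (x + a⁻¹*c*z) (a*y - 2*c*x - a⁻¹*c^2*z) (a⁻¹*z) := by
        rw [conj_apply, hgm, hginv]
        exact conj_mk2 a c x y z ha
      rw [Submodule.map_span, Set.image_singleton, hc]
    · rintro ⟨a, c, ha, rfl⟩
      refine ⟨gB a c ha, by rw [coe_gB]; norm_num, by rw [coe_gB]; norm_num, ?_⟩
      have hc : (conj (gB a c ha)) (mk2 x y z)
          = mk2 (x + a⁻¹*c*z) (a*y - 2*c*x - a⁻¹*c^2*z) (a⁻¹*z) := by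
        rw [conj_apply, coe_gB, coe_gB_inv]
        exact conj_mk2 a c x y z ha
      rw [Submodule.map_span, Set.image_singleton, hc]
  -- membership in L
  have memL : ∀ x y z : ZMod p, ¬(x = 0 ∧ y = 0 ∧ z = 0) →
      Submodule.span (ZMod p) {mk2 x y z} ∈ L := by
    intro x y z h
    rw [hL]
    refine ⟨?_, mk2 x y z, mk2_ne_zero h, rfl⟩
    intro v hv
    obtain ⟨μ, rfl⟩ := Submodule.mem_span_singleton.mp hv
    rw [smul_mk2]
    simp [mk2, Matrix.trace_fin_two]
  -- extraction of coordinate equations from rel between explicit lines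
  have getEq : ∀ {x y z x' y' z' : ZMod p},
      rel (Submodule.span (ZMod p) {mk2 x y z}) (Submodule.span (ZMod p) {mk2 x' y' z'}) →
      ∃ a c μ : ZMod p, a ≠ 0 ∧ μ ≠ 0 ∧
        x + a⁻¹*c*z = μ*x' ∧ a*y - 2*c*x - a⁻¹*c^2*z = μ*y' ∧ a⁻¹*z = μ*z' := by
    intro x y z x' y' z' h
    obtain ⟨a, c, ha, hW⟩ := (relIff x y z _).mp h
    obtain ⟨μ, hμ, e1, e2, e3⟩ := span_mk2_eq_iff.mp hW
    exact ⟨a, c, μ, ha, hμ, e1, e2, e3⟩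
  -- the ten non-relations
  have n12 : ¬ rel r₁ r₂ := by
    rw [H1, H2]; intro h
    obtain ⟨a, c, μ, ha, hμ, e1, e2, e3⟩ := getEq h
    exact hμ (by linear_combination -e1)
  have n13 : ¬ rel r₁ r₃ := by
    rw [H1, H3]; intro h
    obtain ⟨a, c, μ, ha, hμ, e1, e2, e3⟩ := getEq h
    exact hμ (by linear_combination -e3)
  have n14 : ¬ rel r₁ r₄ := by
    rw [H1, H4]; intro h
    obtain ⟨a, c, μ, ha, hμ, e1, e2, e3⟩ := getEq h
    exact hμ (by linear_combination -e3)
  have n15 : ¬ rel r₁ r₅ := by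
    rw [H1, H5]; intro h
    obtain ⟨a, c, μ, ha, hμ, e1, e2, e3⟩ := getEq h
    exact hμ (by linear_combination -e3)
  have n23 : ¬ rel r₂ r₃ := by
    rw [H2, H3]; intro h
    obtain ⟨a, c, μ, ha, hμ, e1, e2, e3⟩ := getEq h
    exact hμ (by linear_combination -e3)
  have n24 : ¬ rel r₂ r₄ := by
    rw [H2, H4]; intro h
    obtain ⟨a, c, μ, ha, hμ, e1, e2, e3⟩ := getEq h
    exact hμ (by linear_combination -e3)
  have n25 : ¬ rel r₂ r₅ := by
    rw [H2, H5]; intro h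
    obtain ⟨a, c, μ, ha, hμ, e1, e2, e3⟩ := getEq h
    exact hμ (by linear_combination -e3)
  have n34 : ¬ rel r₃ r₄ := by
    rw [H3, H4]; intro h
    obtain ⟨a, c, μ, ha, hμ, e1, e2, e3⟩ := getEq h
    -- e1 : 0 + a⁻¹*c*1 = μ*0, e2 : a*0 - 2*c*0 - a⁻¹*c^2*1 = μ*1
    have hc : c = 0 := by
      have := mul_eq_zero.mp (show a⁻¹ * c = 0 by linear_combination e1)
      rcases this with h' | h'
      · exact absurd h' (inv_ne_zero ha)
      · exact h'
    rw [hc] at e2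
    exact hμ (by linear_combination -e2)
  have n35 : ¬ rel r₃ r₅ := by
    rw [H3, H5]; intro h
    obtain ⟨a, c, μ, ha, hμ, e1, e2, e3⟩ := getEq h
    have hc : c = 0 := by
      have := mul_eq_zero.mp (show a⁻¹ * c = 0 by linear_combination e1)
      rcases this with h' | h'
      · exact absurd h' (inv_ne_zero ha)
      · exact h'
    have hbz : μ * b = 0 := by rw [← e2, hc]; ring
    rcases mul_eq_zero.mp hbz with h' | h'
    · exact hμ h'
    · exact hb0 h'
  have n45 : ¬ rel r₄ r₅ := by
    rw [H4, H5]; intro h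
    obtain ⟨a, c, μ, ha, hμ, e1, e2, e3⟩ := getEq h
    have hc : c = 0 := by
      have := mul_eq_zero.mp (show a⁻¹ * c = 0 by linear_combination e1)
      rcases this with h' | h'
      · exact absurd h' (inv_ne_zero ha)
      · exact h'
    refine hb ⟨a, ?_⟩
    rw [hc] at e2
    have h3 : a * a⁻¹ = 1 := mul_inv_cancel₀ ha
    linear_combination (-a)*e2 + (a*b)*e3 + (-b)*h3
  have hdvd : 2 ∣ (p - 1) := by
    have hodd := (Fact.out : p.Prime).odd_of_ne_two hp2
    have := Nat.odd_iff.mp hodd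
    omega
  have m1 : r₁ ∈ L := by rw [H1]; exact memL 0 1 0 (by simp)
  have m2 : r₂ ∈ L := by rw [H2]; exact memL 1 0 0 (by simp)
  have m3 : r₃ ∈ L := by rw [H3]; exact memL 0 0 1 (by simp)
  have m4 : r₄ ∈ L := by rw [H4]; exact memL 0 1 1 (by simp)
  have m5 : r₅ ∈ L := by rw [H5]; exact memL 0 b 1 (by simp)
  refine ⟨⟨m1, m2, m3, m4, m5⟩, ?_, ?_, ?_, ?_, ?_, ?_, ?_⟩
  · -- completeness
    intro W hW
    rw [hL] at hW
    obtain ⟨htr, v, hv0, rfl⟩ := hW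
    have hv11 : v 1 1 = -(v 0 0) := by
      have h := htr v (Submodule.mem_span_singleton_self v)
      rw [Matrix.trace_fin_two] at h
      linear_combination h
    obtain ⟨x, y, z, rfl⟩ : ∃ x y z, v = mk2 x y z := by
      refine ⟨v 0 0, v 0 1, v 1 0, ?_⟩
      conv_lhs => rw [Matrix.eta_fin_two v]
      rw [hv11]
      rfl
    have hnz : ¬(x = 0 ∧ y = 0 ∧ z = 0) := by
      rintro ⟨rfl, rfl, rfl⟩
      exact hv0 (by ext i j; fin_cases i <;> fin_cases j <;> simp [mk2])
    by_cases hz : z = 0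
    · subst hz
      by_cases hx : x = 0
      · subst hx
        have hy : y ≠ 0 := fun h => hnz ⟨rfl, h, rfl⟩
        left
        rw [H1, relIff]
        exact ⟨y, 0, hy, span_mk2_eq_iff.mpr ⟨1, one_ne_zero, by ring, by ring, by ring⟩⟩
      · right; left
        rw [H2, relIff]
        refine ⟨1, -(2⁻¹*(x⁻¹*y)), one_ne_zero,
          span_mk2_eq_iff.mpr ⟨x⁻¹, inv_ne_zero hx, ?_, ?_, ?_⟩⟩
        · field_simp; ring
        · field_simp
          ring
        · ring
    · by_cases ht : (z⁻¹*x)^2 + z⁻¹*y = 0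
      · right; right; left
        rw [H3, relIff]
        refine ⟨z⁻¹, z⁻¹*x, inv_ne_zero hz, span_mk2_eq_iff.mpr ⟨1, one_ne_zero, ?_, ?_, ?_⟩⟩
        · rw [inv_inv]; field_simp; ring
        · rw [inv_inv]
          have hzz : z * z⁻¹ = 1 := mul_inv_cancel₀ hz
          linear_combination (-z)*ht + y*hzz
        · rw [inv_inv]; ring
      · by_cases hsq : IsSquare ((z⁻¹*x)^2 + z⁻¹*y)
        · obtain ⟨s, hs⟩ := hsq
          have hs0 : s ≠ 0 := by
            rintro rfl
            rw [mul_zero] at hs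
            exact ht hs
          right; right; right; left
          rw [H4, relIff]
          refine ⟨s, z⁻¹*x, hs0,
            span_mk2_eq_iff.mpr ⟨s⁻¹*z⁻¹, mul_ne_zero (inv_ne_zero hs0) (inv_ne_zero hz),
              ?_, ?_, ?_⟩⟩
          · ring
          · have hss : s * s⁻¹ = 1 := mul_inv_cancel₀ hs0
            have hzz : z * z⁻¹ = 1 := mul_inv_cancel₀ hz
            linear_combination (-s⁻¹)*hs - s*hss
          · have hzz : z * z⁻¹ = 1 := mul_inv_cancel₀ hz
            linear_combination (-(s⁻¹)) * hzz
        · obtain ⟨s, hs0, hs⟩ := exists_sq_mul hb hsq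
          right; right; right; right
          rw [H5, relIff]
          refine ⟨s, z⁻¹*x, hs0,
            span_mk2_eq_iff.mpr ⟨s⁻¹*z⁻¹, mul_ne_zero (inv_ne_zero hs0) (inv_ne_zero hz),
              ?_, ?_, ?_⟩⟩
          · ring
          · have hss : s * s⁻¹ = 1 := mul_inv_cancel₀ hs0
            have hzz : z * z⁻¹ = 1 := mul_inv_cancel₀ hz
            linear_combination s⁻¹*hs - (s*b)*hss
          · have hzz : z * z⁻¹ = 1 := mul_inv_cancel₀ hz
            linear_combination (-(s⁻¹)) * hzz
  · -- pairwise
    refine List.Pairwise.cons ?_ (List.Pairwise.cons ?_ (List.Pairwise.cons ?_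
      (List.Pairwise.cons ?_ (List.pairwise_singleton _ _))))
    · intro W hW
      simp only [List.mem_cons, List.not_mem_nil, or_false] at hW
      rcases hW with rfl | rfl | rfl | rfl
      exacts [n12, n13, n14, n15]
    · intro W hW
      simp only [List.mem_cons, List.not_mem_nil, or_false] at hW
      rcases hW with rfl | rfl | rfl
      exacts [n23, n24, n25]
    · intro W hW
      simp only [List.mem_cons, List.not_mem_nil, or_false] at hW
      rcases hW with rfl | rfl
      exacts [n34, n35]
    · intro W hW
      simp only [List.mem_cons, List.not_mem_nil, or_false] at hW
      rcases hW with rfl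
      exact n45
  · -- orbit of r₁
    have hset : {W ∈ L | rel r₁ W} = {r₁} := by
      ext W
      simp only [Set.mem_setOf_eq, Set.mem_singleton_iff]
      constructor
      · rintro ⟨-, hr⟩
        rw [H1] at hr
        obtain ⟨a, c, ha, rfl⟩ := (relIff 0 1 0 W).mp hr
        rw [H1]
        exact span_mk2_eq_iff.mpr ⟨a⁻¹, inv_ne_zero ha, by ring, by field_simp; ring, by ring⟩
      · rintro rfl
        refine ⟨m1, ?_⟩
        rw [H1]
        exact (relIff 0 1 0 _).mpr ⟨1, 0, one_ne_zero,
          span_mk2_eq_iff.mpr ⟨1, one_ne_zero, by ring, by ring, by ring⟩⟩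
    rw [hset, Set.ncard_singleton]
  · -- orbit of r₂
    have hset : {W ∈ L | rel r₂ W}
        = Set.range (fun u : ZMod p => Submodule.span (ZMod p) {mk2 1 u 0}) := by
      ext W
      simp only [Set.mem_setOf_eq, Set.mem_range]
      constructor
      · rintro ⟨-, hr⟩
        rw [H2] at hr
        obtain ⟨a, c, ha, rfl⟩ := (relIff 1 0 0 W).mp hr
        exact ⟨-(2*c), span_mk2_eq_iff.mpr ⟨1, one_ne_zero, by ring, by ring, by ring⟩⟩
      · rintro ⟨u, rfl⟩
        refine ⟨memL 1 u 0 (by simp), ?_⟩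
        rw [H2]
        refine (relIff 1 0 0 _).mpr ⟨1, -(2⁻¹*u), one_ne_zero,
          span_mk2_eq_iff.mpr ⟨1, one_ne_zero, by ring, ?_, by ring⟩⟩
        have h2i : (2 : ZMod p) * 2⁻¹ = 1 := mul_inv_cancel₀ h2z
        field_simp
        ring
    have hinj : Function.Injective
        (fun u : ZMod p => Submodule.span (ZMod p) {mk2 1 u 0}) := by
      intro u u' h
      obtain ⟨μ, hμ, e1, e2, e3⟩ := span_mk2_eq_iff.mp h
      have hμ1 : μ = 1 := by linear_combination -e1
      rw [hμ1] at e2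
      linear_combination -e2
    rw [hset, ncard_range _ hinj, Nat.card_zmod]
  · -- orbit of r₃
    have hset : {W ∈ L | rel r₃ W}
        = Set.range (fun u : ZMod p => Submodule.span (ZMod p) {mk2 u (-(u^2)) 1}) := by
      ext W
      simp only [Set.mem_setOf_eq, Set.mem_range]
      constructor
      · rintro ⟨-, hr⟩
        rw [H3] at hr
        obtain ⟨a, c, ha, rfl⟩ := (relIff 0 0 1 W).mp hr
        exact ⟨c, span_mk2_eq_iff.mpr ⟨a⁻¹, inv_ne_zero ha, by ring, by ring, by ring⟩⟩
      · rintro ⟨u, rfl⟩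
        refine ⟨memL u (-(u^2)) 1 (by simp), ?_⟩
        rw [H3]
        exact (relIff 0 0 1 _).mpr ⟨1, u, one_ne_zero,
          span_mk2_eq_iff.mpr ⟨1, one_ne_zero, by field_simp; ring, by rw [inv_one]; ring, by field_simp⟩⟩
    have hinj : Function.Injective
        (fun u : ZMod p => Submodule.span (ZMod p) {mk2 u (-(u^2)) 1}) := by
      intro u u' h
      obtain ⟨μ, hμ, e1, e2, e3⟩ := span_mk2_eq_iff.mp h
      have hμ1 : μ = 1 := by linear_combination -e3
      rw [hμ1] at e1
      linear_combination -e1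
    rw [hset, ncard_range _ hinj, Nat.card_zmod]
  · -- orbit of r₄
    have hset : {W ∈ L | rel r₄ W}
        = Set.range (fun q : ZMod p × {t : ZMod p // t ≠ 0 ∧ IsSquare t} =>
            Submodule.span (ZMod p) {mk2 q.1 (q.2.1 - q.1^2) 1}) := by
      ext W
      simp only [Set.mem_setOf_eq, Set.mem_range]
      constructor
      · rintro ⟨-, hr⟩
        rw [H4] at hr
        obtain ⟨a, c, ha, rfl⟩ := (relIff 0 1 1 W).mp hr
        refine ⟨(c, ⟨a^2, pow_ne_zero 2 ha, ⟨a, sq a⟩⟩), ?_⟩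
        refine span_mk2_eq_iff.mpr ⟨a⁻¹, inv_ne_zero ha, by ring, ?_, by ring⟩
        have hss : a * a⁻¹ = 1 := mul_inv_cancel₀ ha
        field_simp
        ring
      · rintro ⟨⟨u, ⟨t, ht0, hts⟩⟩, rfl⟩
        refine ⟨memL u (t - u^2) 1 (by simp), ?_⟩
        rw [H4]
        obtain ⟨s, hs⟩ := hts
        have hs0 : s ≠ 0 := by rintro rfl; rw [mul_zero] at hs; exact ht0 hs
        refine (relIff 0 1 1 _).mpr ⟨s, u, hs0,
          span_mk2_eq_iff.mpr ⟨s⁻¹, inv_ne_zero hs0, by ring, ?_, by ring⟩⟩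
        have hss : s * s⁻¹ = 1 := mul_inv_cancel₀ hs0
        linear_combination (-s⁻¹)*hs - s*hss
    have hinj : Function.Injective
        (fun q : ZMod p × {t : ZMod p // t ≠ 0 ∧ IsSquare t} =>
            Submodule.span (ZMod p) {mk2 q.1 (q.2.1 - q.1^2) 1}) := by
      rintro ⟨u, ⟨t, ht⟩⟩ ⟨u', ⟨t', ht'⟩⟩ h
      simp only at h
      obtain ⟨μ, hμ, e1, e2, e3⟩ := span_mk2_eq_iff.mp h
      have hμ1 : μ = 1 := by linear_combination -e3
      rw [hμ1] at e1 e2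
      have hu : u = u' := by linear_combination -e1
      have htt : t = t' := by linear_combination -e2 + (u + u') * hu
      simp [hu, htt]
    rw [hset, ncard_range _ hinj, Nat.card_prod, Nat.card_zmod, natCard_sq hp2,
      Nat.mul_div_assoc p hdvd]
  · -- orbit of r₅
    have hset : {W ∈ L | rel r₅ W}
        = Set.range (fun q : ZMod p × {t : ZMod p // ¬ IsSquare t} =>
            Submodule.span (ZMod p) {mk2 q.1 (q.2.1 - q.1^2) 1}) := by
      ext W
      simp only [Set.mem_setOf_eq, Set.mem_range]
      constructor
      · rintro ⟨-, hr⟩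
        rw [H5] at hr
        obtain ⟨a, c, ha, rfl⟩ := (relIff 0 b 1 W).mp hr
        refine ⟨(c, ⟨a^2*b, sq_mul_not_isSquare hb ha⟩), ?_⟩
        refine span_mk2_eq_iff.mpr ⟨a⁻¹, inv_ne_zero ha, by ring, ?_, by ring⟩
        have hss : a * a⁻¹ = 1 := mul_inv_cancel₀ ha
        field_simp
        ring
      · rintro ⟨⟨u, ⟨t, hts⟩⟩, rfl⟩
        refine ⟨memL u (t - u^2) 1 (by simp), ?_⟩
        rw [H5]
        obtain ⟨s, hs0, hs⟩ := exists_sq_mul hb hts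
        refine (relIff 0 b 1 _).mpr ⟨s, u, hs0,
          span_mk2_eq_iff.mpr ⟨s⁻¹, inv_ne_zero hs0, by ring, ?_, by ring⟩⟩
        have hss : s * s⁻¹ = 1 := mul_inv_cancel₀ hs0
        linear_combination s⁻¹*hs - (s*b)*hss
    have hinj : Function.Injective
        (fun q : ZMod p × {t : ZMod p // ¬ IsSquare t} =>
            Submodule.span (ZMod p) {mk2 q.1 (q.2.1 - q.1^2) 1}) := by
      rintro ⟨u, ⟨t, ht⟩⟩ ⟨u', ⟨t', ht'⟩⟩ h
      simp only at h
      obtain ⟨μ, hμ, e1, e2, e3⟩ := span_mk2_eq_iff.mp h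
      have hμ1 : μ = 1 := by linear_combination -e3
      rw [hμ1] at e1 e2
      have hu : u = u' := by linear_combination -e1
      have htt : t = t' := by linear_combination -e2 + (u + u') * hu
      simp [hu, htt]
    rw [hset, ncard_range _ hinj, Nat.card_prod, Nat.card_zmod, natCard_nonsq hp2,
      Nat.mul_div_assoc p hdvd]
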